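/- Suppose Σ_{l=1}^L B_l^T B_l has full rank K_c. Let U_c be an n_c × K_c real matrix with orthonormal columns and Λ_c a K_c × K_c diagonal matrix with nonzero diagonal entries such that S̃_c = U_c Λ_c U_c^T, and suppose every row of U_c is nonzero. Let U_c* be the matrix obtained from U_c by normalizing each row to unit Euclidean length. Then for all j, j̃ ∈ [n_c]: U_c*(j,:) = U_c*(j̃,:) if and only if Z_c(j,:) = Z_c(j̃,:); moreover, whenever Z_c(j,:) ≠ Z_c(j̃,:) one has ‖U_c*(j,:) − U_c*(j̃,:)‖ = √2. -/

import Mathlib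

open Matrix Finset

/-- Lemma 1 of the paper, column part, full-rank case.
If `∑ l, (B l)ᵀ * B l` has full rank `K_c` and `S̃_c = U_c Λ_c U_cᵀ` with `U_c` having
orthonormal columns, `Λ_c` diagonal with nonzero diagonal entries, and all rows of `U_c`
nonzero, then the row-normalized matrix `U_c*` satisfies: `U_c*(j,:) = U_c*(j₂,:)` iff
`Z_c(j,:) = Z_c(j₂,:)`, and rows of distinct communities are at Euclidean distance `√2`. -/
theorem stmt3
    (nr nc Kr Kc L : ℕ)
    (hnr : 0 < nr) (hnc : 0 < nc) (hKr : 0 < Kr) (hKc : 0 < Kc) (hL : 0 < L)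
    (Zr : Matrix (Fin nr) (Fin Kr) ℝ) (Zc : Matrix (Fin nc) (Fin Kc) ℝ)
    (hZr01 : ∀ i k, Zr i k = 0 ∨ Zr i k = 1)
    (hZrrow : ∀ i, ∃! k, Zr i k = 1)
    (hZrcol : ∀ k, ∃ i, Zr i k = 1)
    (hZc01 : ∀ j k, Zc j k = 0 ∨ Zc j k = 1)
    (hZcrow : ∀ j, ∃! k, Zc j k = 1)
    (hZccol : ∀ k, ∃ j, Zc j k = 1)
    (θr : Fin nr → ℝ) (θc : Fin nc → ℝ)
    (hθr : ∀ i, 0 < θr i ∧ θr i ≤ 1) (hθc : ∀ j, 0 < θc j ∧ θc j ≤ 1)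
    (B : Fin L → Matrix (Fin Kr) (Fin Kc) ℝ)
    (hB01 : ∀ l k k', 0 ≤ B l k k' ∧ B l k k' ≤ 1)
    (Ωm : Fin L → Matrix (Fin nr) (Fin nc) ℝ)
    (hΩm : ∀ l, Ωm l = Matrix.diagonal θr * Zr * B l * (Zc)ᵀ * Matrix.diagonal θc)
    (Stc : Matrix (Fin nc) (Fin nc) ℝ)
    (hStc : Stc = ∑ l, (Ωm l)ᵀ * Ωm l)
    (hrank : (∑ l, (B l)ᵀ * B l).rank = Kc)
    (Uc : Matrix (Fin nc) (Fin Kc) ℝ) (Λc : Fin Kc → ℝ)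
    (hΛ : ∀ k, Λc k ≠ 0)
    (hUorth : (Uc)ᵀ * Uc = 1)
    (hdecomp : Stc = Uc * Matrix.diagonal Λc * (Uc)ᵀ)
    (hrows : ∀ j, Uc j ≠ 0)
    (Ustar : Matrix (Fin nc) (Fin Kc) ℝ)
    (hUstar : ∀ j k, Ustar j k = Uc j k / Real.sqrt (∑ k', (Uc j k') ^ 2)) :
    ∀ j j₂ : Fin nc,
      (Ustar j = Ustar j₂ ↔ Zc j = Zc j₂) ∧
      (Zc j ≠ Zc j₂ →
        Real.sqrt (∑ k, (Ustar j k - Ustar j₂ k) ^ 2) = Real.sqrt 2) := by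
  classical
  choose g hg1 hg2 using hZcrow
  have hZ : ∀ j k, Zc j k = if k = g j then 1 else 0 := by
    intro j k
    by_cases h : k = g j
    · subst h; simp [hg1 j]
    · rcases hZc01 j k with h0 | h1
      · simp [h, h0]
      · exact absurd (hg2 j k h1) h
  -- Stc factors through diagonal θc * Zc
  set N : Matrix (Fin Kc) (Fin nc) ℝ :=
    ∑ l, (B l)ᵀ * ((Zr)ᵀ * (Matrix.diagonal θr * Ωm l)) with hNdef
  have hStcN : Stc = Matrix.diagonal θc * Zc * N := by
    rw [hStc, hNdef, Matrix.mul_sum]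
    refine Finset.sum_congr rfl fun l _ => ?_
    have ht : (Ωm l)ᵀ
        = Matrix.diagonal θc * (Zc * ((B l)ᵀ * ((Zr)ᵀ * Matrix.diagonal θr))) := by
      rw [hΩm l]
      simp [Matrix.transpose_mul, Matrix.diagonal_transpose, Matrix.mul_assoc]
    rw [ht]
    simp [Matrix.mul_assoc]
  have hSU : Stc * Uc = Uc * Matrix.diagonal Λc := by
    calc Stc * Uc = Uc * Matrix.diagonal Λc * ((Uc)ᵀ * Uc) := by
          rw [hdecomp, Matrix.mul_assoc]
      _ = Uc * Matrix.diagonal Λc := by rw [hUorth, Matrix.mul_one]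
  set W : Matrix (Fin Kc) (Fin Kc) ℝ :=
    N * Uc * Matrix.diagonal (fun k => (Λc k)⁻¹) with hWdef
  have hUW : Uc = Matrix.diagonal θc * Zc * W := by
    have h1 : Uc * (Matrix.diagonal Λc * Matrix.diagonal fun k => (Λc k)⁻¹) = Uc := by
      rw [Matrix.diagonal_mul_diagonal]
      have he : (fun k => Λc k * (Λc k)⁻¹) = fun _ => (1:ℝ) :=
        funext fun k => mul_inv_cancel₀ (hΛ k)
      rw [he, Matrix.diagonal_one, Matrix.mul_one]
    calc Uc = Uc * Matrix.diagonal Λc * Matrix.diagonal (fun k => (Λc k)⁻¹) := by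
          rw [Matrix.mul_assoc, h1]
      _ = Stc * Uc * Matrix.diagonal (fun k => (Λc k)⁻¹) := by rw [hSU]
      _ = Matrix.diagonal θc * Zc * W := by
          rw [hStcN, hWdef]; simp [Matrix.mul_assoc]
  have hUrow : ∀ j k, Uc j k = θc j * W (g j) k := by
    intro j k
    rw [hUW, Matrix.mul_apply]
    have h0 : ∀ k', (Matrix.diagonal θc * Zc) j k' * W k' k
        = (if k' = g j then θc j * W (g j) k else 0) := by
      intro k'
      rw [Matrix.diagonal_mul, hZ]
      by_cases h : k' = g j <;> simp [h]
    rw [Finset.sum_congr rfl fun k' _ => h0 k']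
    simp
  set d : Fin Kc → ℝ := fun m => ∑ j, (θc j)^2 * (if g j = m then 1 else 0) with hddef
  have hd : ∀ m, d m = ∑ j, (θc j)^2 * (if g j = m then 1 else 0) := fun m => rfl
  have hdpos : ∀ m, 0 < d m := by
    intro m
    obtain ⟨j, hj⟩ := hZccol m
    have hgj : g j = m := (hg2 j m hj).symm ▸ rfl
    have hterm : (θc j)^2 * (if g j = m then (1:ℝ) else 0) = (θc j)^2 := by
      rw [if_pos hgj, mul_one]
    have hle : (θc j)^2 * (if g j = m then (1:ℝ) else 0) ≤ d m := by
      rw [hd m]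
      refine Finset.single_le_sum
        (f := fun i => (θc i)^2 * (if g i = m then (1:ℝ) else 0))
        (fun i _ => ?_) (Finset.mem_univ j)
      have h01 : (0:ℝ) ≤ (if g i = m then (1:ℝ) else 0) := by
        by_cases h : g i = m <;> simp [h]
      exact mul_nonneg (sq_nonneg _) h01
    have hpos : (0:ℝ) < (θc j)^2 := pow_pos (hθc j).1 2
    calc (0:ℝ) < (θc j)^2 := hpos
      _ = (θc j)^2 * (if g j = m then (1:ℝ) else 0) := hterm.symm
      _ ≤ d m := hle
  have hOrtho : ∀ k k', ∑ m, d m * (W m k * W m k') = if k = k' then (1:ℝ) else 0 := by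
    intro k k'
    have h0 : ∀ m, d m * (W m k * W m k')
        = ∑ j, (if g j = m then (θc j)^2 * (W m k * W m k') else 0) := by
      intro m
      rw [hd m, Finset.sum_mul]
      refine Finset.sum_congr rfl fun j _ => ?_
      by_cases hc : g j = m <;> simp [hc]
    calc ∑ m, d m * (W m k * W m k')
        = ∑ m, ∑ j, (if g j = m then (θc j)^2 * (W m k * W m k') else 0) :=
          Finset.sum_congr rfl fun m _ => h0 m
      _ = ∑ j, ∑ m, (if g j = m then (θc j)^2 * (W m k * W m k') else 0) :=
          Finset.sum_comm
      _ = ∑ j, (θc j)^2 * (W (g j) k * W (g j) k') := by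
          refine Finset.sum_congr rfl fun j _ => ?_
          rw [Finset.sum_ite_eq]
          simp
      _ = ∑ j, Uc j k * Uc j k' := by
          refine Finset.sum_congr rfl fun j _ => ?_
          rw [hUrow, hUrow]; ring
      _ = ((Uc)ᵀ * Uc) k k' := by
          rw [Matrix.mul_apply]
          exact Finset.sum_congr rfl fun j _ => by rw [Matrix.transpose_apply]
      _ = if k = k' then 1 else 0 := by rw [hUorth, Matrix.one_apply]
  have hG1 : (W)ᵀ * (Matrix.diagonal d * W) = 1 := by
    ext k k'
    rw [Matrix.mul_apply, Matrix.one_apply, ← hOrtho k k']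
    refine Finset.sum_congr rfl fun m _ => ?_
    rw [Matrix.transpose_apply, Matrix.diagonal_mul]
    ring
  have hG2 : Matrix.diagonal d * W * (W)ᵀ = 1 := mul_eq_one_comm.mp hG1
  have hWW : ∀ m m', d m * (∑ k, W m k * W m' k) = if m = m' then (1:ℝ) else 0 := by
    intro m m'
    have h : (Matrix.diagonal d * W * (W)ᵀ) m m'
        = (1 : Matrix (Fin Kc) (Fin Kc) ℝ) m m' := by rw [hG2]
    rw [Matrix.mul_apply, Matrix.one_apply] at h
    rw [Finset.mul_sum, ← h]
    refine Finset.sum_congr rfl fun k _ => ?_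
    rw [Matrix.diagonal_mul, Matrix.transpose_apply]
    ring
  have hWsum : ∀ m, ∑ k, W m k * W m k = 1 / d m := by
    intro m
    have h := hWW m m
    rw [if_pos rfl] at h
    rw [eq_div_iff (hdpos m).ne']
    linarith
  have hnorm : ∀ j, ∑ k, (Uc j k)^2 = (θc j)^2 / d (g j) := by
    intro j
    calc ∑ k, (Uc j k)^2 = (θc j)^2 * ∑ k, W (g j) k * W (g j) k := by
          rw [Finset.mul_sum]
          exact Finset.sum_congr rfl fun k _ => by rw [hUrow]; ring
      _ = (θc j)^2 / d (g j) := by rw [hWsum, mul_one_div]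
  have hstar : ∀ j k, Ustar j k = Real.sqrt (d (g j)) * W (g j) k := by
    intro j k
    have hθ := (hθc j).1
    have hdg := hdpos (g j)
    have hs : Real.sqrt (d (g j)) ≠ 0 := (Real.sqrt_pos.mpr hdg).ne'
    have hsq : Real.sqrt ((θc j)^2 / d (g j)) = θc j / Real.sqrt (d (g j)) := by
      rw [div_eq_mul_inv, Real.sqrt_mul (sq_nonneg _), Real.sqrt_inv,
        Real.sqrt_sq hθ.le, div_eq_mul_inv]
    rw [hUstar, hnorm, hUrow, hsq]
    field_simp
  have hsq1 : ∀ j, ∑ k, (Ustar j k)^2 = 1 := by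
    intro j
    have h : ∑ k, (Ustar j k)^2 = d (g j) * ∑ k, W (g j) k * W (g j) k := by
      rw [Finset.mul_sum]
      refine Finset.sum_congr rfl fun k _ => ?_
      rw [hstar, mul_pow, Real.sq_sqrt (hdpos (g j)).le]
      ring
    rw [h, hWsum, mul_one_div, div_self (hdpos (g j)).ne']
  have hcross : ∀ j j₂, g j ≠ g j₂ → ∑ k, Ustar j k * Ustar j₂ k = 0 := by
    intro j j₂ hne
    have h := hWW (g j) (g j₂)
    rw [if_neg hne] at h
    have hWz : ∑ k, W (g j) k * W (g j₂) k = 0 := by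
      rcases mul_eq_zero.mp h with h' | h'
      · exact absurd h' (hdpos (g j)).ne'
      · exact h'
    have h2 : ∑ k, Ustar j k * Ustar j₂ k
        = (Real.sqrt (d (g j)) * Real.sqrt (d (g j₂))) * ∑ k, W (g j) k * W (g j₂) k := by
      rw [Finset.mul_sum]
      exact Finset.sum_congr rfl fun k _ => by rw [hstar, hstar]; ring
    rw [h2, hWz, mul_zero]
  intro j j₂
  have hgZ : Zc j = Zc j₂ ↔ g j = g j₂ := by
    constructor
    · intro h
      have h1 : Zc j₂ (g j) = 1 := by rw [← h]; exact hg1 j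
      exact hg2 j₂ (g j) h1
    · intro h
      funext k
      rw [hZ, hZ, h]
  constructor
  · rw [hgZ]
    constructor
    · intro h
      by_contra hne
      have hk : ∀ k, Ustar j k = Ustar j₂ k := fun k => congrFun h k
      have habs : (1:ℝ) = 0 := by
        rw [← hsq1 j, ← hcross j j₂ hne]
        exact Finset.sum_congr rfl fun k _ => by rw [sq, hk k]
      norm_num at habs
    · intro h
      funext k
      rw [hstar, hstar, h]
  · intro hZne
    have hne : g j ≠ g j₂ := fun h => hZne (hgZ.mpr h)
    have h2 : ∑ k, (Ustar j k - Ustar j₂ k)^2 = 2 := by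
      have expand : ∀ k ∈ Finset.univ, (Ustar j k - Ustar j₂ k)^2
          = ((Ustar j k)^2 + (Ustar j₂ k)^2) - 2*(Ustar j k * Ustar j₂ k) :=
        fun k _ => by ring
      rw [Finset.sum_congr rfl expand, Finset.sum_sub_distrib, Finset.sum_add_distrib,
        ← Finset.mul_sum, hsq1 j, hsq1 j₂, hcross j j₂ hne]
      norm_num
    rw [h2]
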